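/- Let k > 2 and m ≥ φ(k) + 1 be integers, and write Φ_k(m + X) = Σ_{d=0}^{φ(k)} p_d X^d, where Φ_k is the k-th cyclotomic polynomial and φ is Euler's totient. Then for each 1 ≤ d ≤ φ(k), the coefficient p_{φ(k)-d} is a real number satisfying (1/2)(m-1)^d · C(φ(k), d) ≤ p_{φ(k)-d} ≤ (m+1)^d · C(φ(k), d), where C(n,d) denotes the binomial coefficient. -/

import Mathlib

open Polynomial Real

private lemma not_odd_mul_pi_div_two {x : ℝ} (h0 : 0 ≤ x) (h1 : x < π / 2) :
    ∀ j : ℤ, x ≠ (2 * j + 1) * π / 2 := by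
  intro j hx
  rcases le_or_gt 0 j with hj | hj
  · have hj' : (0:ℝ) ≤ (j:ℝ) := by exact_mod_cast hj
    nlinarith [pi_pos]
  · have hj2 : j ≤ -1 := by omega
    have hj' : (j : ℝ) ≤ -1 := by exact_mod_cast hj2
    nlinarith [pi_pos]

private lemma arctan_le_self' {x : ℝ} (hx : 0 ≤ x) : arctan x ≤ x := by
  have h1 : 0 ≤ arctan x := by
    rw [← Real.arctan_zero]; exact Real.arctan_strictMono.monotone hx
  have := Real.le_tan h1 (Real.arctan_lt_pi_div_two x)
  rwa [Real.tan_arctan] at this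

private lemma step_mul (z P : ℂ) (T tb : ℝ) (hT0 : 0 ≤ T) (htb0 : 0 < tb)
    (hTtb : T * tb < 1) (hPre : 0 < P.re) (hPim : |P.im| ≤ T * P.re)
    (hzre : 0 < z.re) (hzim : |z.im| ≤ tb * z.re) :
    z.re * P.re * (1 - T * tb) ≤ (z * P).re ∧
      |(z * P).im| ≤ ((T + tb) / (1 - T * tb)) * (z * P).re := by
  have h1 : |z.im * P.im| ≤ (tb * z.re) * (T * P.re) := by
    rw [abs_mul]
    exact mul_le_mul hzim hPim (abs_nonneg _) (by positivity)
  have hre : z.re * P.re * (1 - T * tb) ≤ (z * P).re := by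
    rw [Complex.mul_re]
    have h5 : z.im * P.im ≤ tb * z.re * (T * P.re) := (le_abs_self _).trans h1
    nlinarith
  refine ⟨hre, ?_⟩
  have h2 : |(z * P).im| ≤ z.re * P.re * (T + tb) := by
    rw [Complex.mul_im]
    calc |z.re * P.im + z.im * P.re| ≤ |z.re * P.im| + |z.im * P.re| := abs_add_le _ _
      _ = z.re * |P.im| + |z.im| * P.re := by
          rw [abs_mul, abs_mul, abs_of_pos hzre, abs_of_pos hPre]
      _ ≤ z.re * (T * P.re) + (tb * z.re) * P.re := by
          apply add_le_add
          · exact mul_le_mul_of_nonneg_left hPim hzre.le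
          · exact mul_le_mul_of_nonneg_right hzim hPre.le
      _ = z.re * P.re * (T + tb) := by ring
  have hd : (0:ℝ) < 1 - T * tb := by linarith
  calc |(z * P).im| ≤ z.re * P.re * (T + tb) := h2
    _ = ((T + tb) / (1 - T * tb)) * (z.re * P.re * (1 - T * tb)) := by
        field_simp
    _ ≤ ((T + tb) / (1 - T * tb)) * (z * P).re :=
        mul_le_mul_of_nonneg_left hre (div_nonneg (by linarith) hd.le)

private lemma re_prod_lower {ι : Type*} (s : Finset ι) (f : ι → ℂ) (R : ℝ)
    (hR : 1 ≤ R) (hcard : (s.card : ℝ) ≤ R)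
    (hre : ∀ i ∈ s, R ≤ (f i).re) (him : ∀ i ∈ s, |(f i).im| ≤ 1) :
    (1/2) * R ^ s.card ≤ (∏ i ∈ s, f i).re := by
  have hRpos : (0:ℝ) < R := by linarith
  have hβ0' : 0 < arctan (1/R) := by
    rw [← Real.arctan_zero]; exact Real.arctan_strictMono (by positivity)
  set β := arctan (1/R) with hβ
  have hβ0 : 0 < β := hβ0'
  have htanβ : Real.tan β = 1 / R := Real.tan_arctan _
  have hβle : β ≤ 1 / R := arctan_le_self' (by positivity)
  have hpi : (3:ℝ) < π := Real.pi_gt_three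
  have hcardβ : (s.card : ℝ) * β ≤ 1 := by
    calc (s.card : ℝ) * β ≤ R * (1/R) :=
          mul_le_mul hcard hβle hβ0.le hRpos.le
      _ = 1 := by field_simp
  have main : ∀ t : Finset ι, t ⊆ s → 0 < (∏ i ∈ t, f i).re ∧
      |(∏ i ∈ t, f i).im| ≤ Real.tan (t.card * β) * (∏ i ∈ t, f i).re := by
    intro t
    induction t using Finset.cons_induction with
    | empty => intro _; simp
    | cons a u ha ih =>
      intro hsub
      have hu : u ⊆ s := fun x hx => hsub (Finset.mem_cons.mpr (Or.inr hx))
      have haS : a ∈ s := hsub (Finset.mem_cons_self a u)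
      obtain ⟨hPre, hPim⟩ := ih hu
      have hzre : R ≤ (f a).re := hre a haS
      have hzim : |(f a).im| ≤ 1 := him a haS
      have hcards : (u.card : ℝ) + 1 ≤ s.card := by
        have := Finset.card_le_card hsub
        rw [Finset.card_cons] at this
        exact_mod_cast this
      have hβcard1 : ((u.card : ℝ) + 1) * β ≤ 1 :=
        le_trans (mul_le_mul_of_nonneg_right hcards hβ0.le) hcardβ
      have hj0 : (0:ℝ) ≤ (u.card : ℝ) * β := by positivity
      have hjlt : (u.card : ℝ) * β < π / 2 := by nlinarith
      have hj1lt : ((u.card : ℝ)+1) * β < π / 2 := by nlinarith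
      have hβlt : β < π / 2 := by nlinarith
      have hT0 : 0 ≤ Real.tan ((u.card : ℝ) * β) :=
        Real.tan_nonneg_of_nonneg_of_le_pi_div_two hj0 hjlt.le
      have htb0 : 0 < Real.tan β := by rw [htanβ]; positivity
      have hTtb : Real.tan ((u.card : ℝ) * β) * Real.tan β < 1 := by
        have h1 : (u.card : ℝ) * β < π/2 - β := by linarith
        have h2 : Real.tan ((u.card : ℝ) * β) < Real.tan (π/2 - β) :=
          Real.tan_lt_tan_of_nonneg_of_lt_pi_div_two hj0 (by linarith) h1
        rw [Real.tan_pi_div_two_sub] at h2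
        have h3 := mul_lt_mul_of_pos_right h2 htb0
        rwa [inv_mul_cancel₀ htb0.ne'] at h3
      have htadd : Real.tan (((u.card : ℝ)+1) * β) =
          (Real.tan ((u.card : ℝ) * β) + Real.tan β) /
            (1 - Real.tan ((u.card : ℝ) * β) * Real.tan β) := by
        rw [add_mul, one_mul, Real.tan_add' ⟨not_odd_mul_pi_div_two hj0 hjlt,
          not_odd_mul_pi_div_two hβ0.le hβlt⟩]
      have hzim' : |(f a).im| ≤ Real.tan β * (f a).re := by
        rw [htanβ]
        calc |(f a).im| ≤ 1 := hzim
          _ ≤ 1/R * (f a).re := by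
              rw [div_mul_eq_mul_div, one_mul, le_div_iff₀ hRpos]; linarith
      obtain ⟨hre1, him1⟩ := step_mul (f a) (∏ i ∈ u, f i) _ _ hT0 htb0 hTtb hPre hPim
        (by linarith) hzim'
      constructor
      · rw [Finset.prod_cons]
        have : 0 < (f a).re * (∏ i ∈ u, f i).re *
            (1 - Real.tan ((u.card : ℝ) * β) * Real.tan β) := by
          apply mul_pos (mul_pos (by linarith) hPre) (by linarith)
        linarith
      · rw [Finset.prod_cons, Finset.card_cons]
        push_cast
        rw [htadd]
        exact him1
  obtain ⟨hre_pos, him_le⟩ := main s le_rfl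
  have hθ0 : 0 ≤ (s.card : ℝ) * β := by positivity
  have hθ1 : (s.card : ℝ) * β ≤ 1 := hcardβ
  have hcosθ : 0 < Real.cos ((s.card : ℝ) * β) := by
    apply Real.cos_pos_of_mem_Ioo
    constructor <;> nlinarith
  have habs : R ^ s.card ≤ ‖∏ i ∈ s, f i‖ := by
    rw [norm_prod]
    calc R ^ s.card = ∏ _i ∈ s, R := by rw [Finset.prod_const]
      _ ≤ ∏ i ∈ s, ‖f i‖ :=
          Finset.prod_le_prod (fun i _ => hRpos.le)
            (fun i hi => (hre i hi).trans (Complex.re_le_norm _))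
  set P := ∏ i ∈ s, f i
  set θ := (s.card : ℝ) * β
  have hsq : ‖P‖^2 * Real.cos θ ^ 2 ≤ P.re^2 := by
    have h1 : ‖P‖^2 = P.re^2 + P.im^2 := by
      rw [Complex.sq_norm, Complex.normSq_apply]; ring
    have h2 : P.im^2 ≤ (Real.tan θ * P.re)^2 := by
      rw [← sq_abs P.im]
      exact pow_le_pow_left₀ (abs_nonneg _) him_le 2
    have h3 : (1 + Real.tan θ ^2)⁻¹ = Real.cos θ ^ 2 := Real.inv_one_add_tan_sq hcosθ.ne'
    have h4 : (1 + Real.tan θ ^2) * Real.cos θ ^ 2 = 1 := by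
      rw [← h3]; field_simp
    nlinarith
  have hcos_ge : (1/2 : ℝ) ≤ Real.cos θ := by
    have h1 : Real.cos 1 ≤ Real.cos θ :=
      Real.cos_le_cos_of_nonneg_of_le_pi hθ0 (by linarith) hθ1
    have h2 : Real.cos (π/3) ≤ Real.cos 1 :=
      Real.cos_le_cos_of_nonneg_of_le_pi (by norm_num) (by linarith) (by linarith)
    rw [Real.cos_pi_div_three] at h2
    linarith
  have hfinal : ‖P‖ * Real.cos θ ≤ P.re := by
    nlinarith [norm_nonneg P]
  calc (1/2:ℝ) * R ^ s.card ≤ Real.cos θ * (R ^ s.card) := by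
        apply mul_le_mul_of_nonneg_right hcos_ge (by positivity)
    _ ≤ Real.cos θ * ‖P‖ := mul_le_mul_of_nonneg_left habs hcosθ.le
    _ ≤ P.re := by linarith [hfinal]


/-- Bounds on the coefficients of `Φ_k(m + X)`: for `1 ≤ d ≤ φ(k)` one has
`(1/2)(m-1)^d C(φ(k),d) ≤ p_{φ(k)-d} ≤ (m+1)^d C(φ(k),d)`. -/
theorem cyclotomic_shift_coeff_bounds (k m : ℕ) (hk : 2 < k)
    (hm : Nat.totient k + 1 ≤ m) (d : ℕ) (hd1 : 1 ≤ d) (hd2 : d ≤ Nat.totient k) :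
    (1 / 2 : ℝ) * ((m : ℝ) - 1) ^ d * (Nat.choose (Nat.totient k) d) ≤
        (((cyclotomic k ℤ).comp (X + C (m : ℤ))).coeff (Nat.totient k - d) : ℝ) ∧
      (((cyclotomic k ℤ).comp (X + C (m : ℤ))).coeff (Nat.totient k - d) : ℝ) ≤
        ((m : ℝ) + 1) ^ d * (Nat.choose (Nat.totient k) d) := by
  have hk0 : k ≠ 0 := by omega
  set n := Nat.totient k with hn
  have hζ : IsPrimitiveRoot (Complex.exp (2 * π * Complex.I / k)) k :=
    Complex.isPrimitiveRoot_exp k hk0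
  set s := primitiveRoots k ℂ with hs
  have hcard : s.card = n := Complex.card_primitiveRoots k
  -- the complex polynomial
  have hmap : ((cyclotomic k ℤ).comp (X + C (m : ℤ))).map (Int.castRingHom ℂ) =
      ∏ μ ∈ s, (X + C ((m : ℂ) - μ)) := by
    rw [Polynomial.map_comp, map_cyclotomic,
      cyclotomic_eq_prod_X_sub_primitiveRoots hζ, prod_comp]
    simp only [Polynomial.map_add, map_X, map_C, sub_comp, X_comp, C_comp, eq_intCast,
      Int.cast_natCast, Polynomial.map_natCast]
    refine Finset.prod_congr rfl fun μ _ => ?_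
    rw [map_sub]
    simp only [Polynomial.C_eq_natCast]
    ring
  have hcoeff : ((((cyclotomic k ℤ).comp (X + C (m : ℤ))).coeff (n - d) : ℤ) : ℂ) =
      ∑ t ∈ s.powersetCard d, ∏ μ ∈ t, ((m : ℂ) - μ) := by
    have h1 : n - d ≤ s.card := by omega
    have h2 : ((((cyclotomic k ℤ).comp (X + C (m : ℤ))).coeff (n - d) : ℤ) : ℂ) =
        (((cyclotomic k ℤ).comp (X + C (m : ℤ))).map (Int.castRingHom ℂ)).coeff (n - d) := by
      simp [coeff_map]
    have h3 : s.card - (n - d) = d := by rw [hcard]; omega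
    rw [h2, hmap, Finset.prod_X_add_C_coeff s (fun μ => (m : ℂ) - μ) h1, h3]
  -- facts about the roots
  have habs1 : ∀ μ ∈ s, ‖μ‖ = 1 := by
    intro μ hμ
    have h := (mem_primitiveRoots (show 0 < k by omega)).mp hμ
    exact Complex.norm_eq_one_of_pow_eq_one h.pow_eq_one hk0
  have hm2 : (2:ℝ) ≤ (m:ℝ) := by
    have : 2 ≤ m := by omega
    exact_mod_cast this
  have hdm : (d:ℝ) ≤ (m:ℝ) - 1 := by
    have : d + 1 ≤ m := by omega
    have := (Nat.cast_le (α := ℝ)).mpr this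
    push_cast at this
    linarith
  -- per-term bounds
  have hterm_low : ∀ t ∈ s.powersetCard d,
      (1/2 : ℝ) * ((m:ℝ) - 1) ^ d ≤ (∏ μ ∈ t, ((m : ℂ) - μ)).re := by
    intro t ht
    obtain ⟨hts, htc⟩ := Finset.mem_powersetCard.mp ht
    have := re_prod_lower t (fun μ => (m : ℂ) - μ) ((m:ℝ) - 1)
      (by linarith) (by rw [htc]; exact hdm)
      (fun μ hμ => by
        have h1 : |μ.re| ≤ 1 := habs1 μ (hts hμ) ▸ Complex.abs_re_le_norm μ
        simp only [Complex.sub_re, Complex.natCast_re]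
        have := (abs_le.mp h1).2
        linarith)
      (fun μ hμ => by
        have h1 : |μ.im| ≤ 1 := habs1 μ (hts hμ) ▸ Complex.abs_im_le_norm μ
        simp only [Complex.sub_im, Complex.natCast_im, zero_sub, abs_neg]
        exact h1)
    rwa [htc] at this
  have hterm_high : ∀ t ∈ s.powersetCard d,
      (∏ μ ∈ t, ((m : ℂ) - μ)).re ≤ ((m:ℝ) + 1) ^ d := by
    intro t ht
    obtain ⟨hts, htc⟩ := Finset.mem_powersetCard.mp ht
    calc (∏ μ ∈ t, ((m : ℂ) - μ)).re ≤ ‖∏ μ ∈ t, ((m : ℂ) - μ)‖ :=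
          Complex.re_le_norm _
      _ = ∏ μ ∈ t, ‖(m : ℂ) - μ‖ := norm_prod t _
      _ ≤ ∏ _μ ∈ t, ((m:ℝ) + 1) := by
          apply Finset.prod_le_prod (fun μ _ => norm_nonneg _)
          intro μ hμ
          calc ‖(m : ℂ) - μ‖ ≤ ‖(m : ℂ)‖ + ‖μ‖ :=
                norm_sub_le _ _
            _ = (m:ℝ) + 1 := by rw [habs1 μ (hts hμ), Complex.norm_natCast]
      _ = ((m:ℝ) + 1) ^ t.card := Finset.prod_const _
      _ = ((m:ℝ) + 1) ^ d := by rw [htc]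
  -- real part of the coefficient
  have hre_eq : ((((cyclotomic k ℤ).comp (X + C (m : ℤ))).coeff (n - d) : ℤ) : ℝ) =
      ∑ t ∈ s.powersetCard d, (∏ μ ∈ t, ((m : ℂ) - μ)).re := by
    have h := congrArg Complex.re hcoeff
    rwa [Complex.intCast_re, Complex.re_sum] at h
  have hcards : (s.powersetCard d).card = Nat.choose n d := by
    rw [Finset.card_powersetCard, hcard]
  rw [hre_eq]
  constructor
  · have := Finset.card_nsmul_le_sum (s.powersetCard d) (fun t => (∏ μ ∈ t, ((m : ℂ) - μ)).re)
      ((1/2 : ℝ) * ((m:ℝ) - 1) ^ d) hterm_low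
    rw [hcards, nsmul_eq_mul] at this
    calc (1/2 : ℝ) * ((m:ℝ) - 1) ^ d * (Nat.choose n d : ℝ)
        = (Nat.choose n d : ℝ) * ((1/2 : ℝ) * ((m:ℝ) - 1) ^ d) := by ring
      _ ≤ _ := this
  · have := Finset.sum_le_card_nsmul (s.powersetCard d) (fun t => (∏ μ ∈ t, ((m : ℂ) - μ)).re)
      (((m:ℝ) + 1) ^ d) hterm_high
    rw [hcards, nsmul_eq_mul] at this
    calc _ ≤ (Nat.choose n d : ℝ) * ((m:ℝ) + 1) ^ d := this
      _ = ((m:ℝ) + 1) ^ d * (Nat.choose n d : ℝ) := by ring
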